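/- Let f ∈ R = D[t;σ] be monic irreducible of degree m > 1 with gcrd(f,t) = 1 and minimal central left multiple h(t) = ĥ(u⁻¹tⁿ). (i) For each z(t) = ẑ(u⁻¹tⁿ) ∈ F[u⁻¹tⁿ] with ẑ ∈ F[x], one has z ∈ Rf if and only if z ∈ Rh. (ii) The set E_f = {z(t) + Rf | z(t) = ẑ(u⁻¹tⁿ) ∈ F[u⁻¹tⁿ]}, with multiplication (x + Rf)∘(y + Rf) = xy + Rf for x, y ∈ F[u⁻¹tⁿ], is a field isomorphic to E_ĥ = F[x]/(ĥ(x)). -/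

import Mathlib

namespace SkewPaper

/-- Data presenting a ring `R` as a skew polynomial ring `D[t;σ]` over a division ring `D`:
`ι` embeds `D`, `t` is the variable, `t * ι a = ι (σ a) * t`, and every element of `R`
is uniquely a finite sum `∑ ι (coeff f i) * t^i`. -/
structure SkewPolyData (D R : Type*) [DivisionRing D] [Ring R] where
  σ : D ≃+* D
  ι : D →+* R
  t : R
  coeff : R → ℕ → D
  twist : ∀ a : D, t * ι a = ι (σ a) * t
  support_finite : ∀ f : R, (Function.support (coeff f)).Finite
  coeff_ext : ∀ f g : R, (∀ i, coeff f i = coeff g i) → f = g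
  coeff_sum : ∀ (c : ℕ →₀ D) (i : ℕ),
    coeff (∑ j ∈ c.support, ι (c j) * t ^ j) i = c i

/-- Two elements are similar if the left modules `R/Rf` and `R/Rg` are isomorphic. -/
def Sim {R : Type*} [Ring R] (f g : R) : Prop :=
  Nonempty ((R ⧸ Submodule.span R {f}) ≃ₗ[R] (R ⧸ Submodule.span R {g}))

/-- `g` divides `f` on the right. -/
def RDvd {R : Type*} [Ring R] (g f : R) : Prop := ∃ q, f = q * g

/-- `g` divides `f` on the left. -/
def LDvd {R : Type*} [Ring R] (g f : R) : Prop := ∃ q, f = g * q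

/-- `Rf` is a two-sided ideal. -/
def RightInvariant {R : Type*} [Ring R] (f : R) : Prop := ∀ r : R, ∃ q, f * r = q * f

/-- `g` is a greatest common right divisor of `a` and `h`. -/
def IsGcrd {R : Type*} [Ring R] (a h g : R) : Prop :=
  RDvd g a ∧ RDvd g h ∧ ∀ g' : R, RDvd g' a → RDvd g' h → RDvd g' g

namespace SkewPolyData

variable {D R : Type*} [DivisionRing D] [Ring R] (S : SkewPolyData D R)

/-- The degree of a skew polynomial (`deg 0 = 0` by convention of `sSup ∅`). -/
noncomputable def deg (f : R) : ℕ := sSup {i | S.coeff f i ≠ 0}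

def Monic (f : R) : Prop := S.coeff f (S.deg f) = 1

/-- constant term -/
def const (f : R) : D := S.coeff f 0

/-- `f` is irreducible: it is not a unit and has no proper factorization. -/
def Irred (f : R) : Prop :=
  ¬ IsUnit f ∧ ¬ ∃ g p : R, 1 ≤ S.deg g ∧ S.deg g < S.deg f ∧
      1 ≤ S.deg p ∧ S.deg p < S.deg f ∧ f = g * p

/-- `f` has a proper factorization. -/
def Reducible (f : R) : Prop :=
  ∃ g p : R, 1 ≤ S.deg g ∧ S.deg g < S.deg f ∧
      1 ≤ S.deg p ∧ S.deg p < S.deg f ∧ f = g * p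

/-- `gcrd(f,t) = 1`: every common right divisor of `f` and `t` is a (degree-0) unit. -/
def CoprimeT (f : R) : Prop := ∀ g : R, RDvd g f → RDvd g S.t → S.deg g = 0

/-- `F = C ∩ Fix(σ)` as a subset of `D`. -/
def Fset : Set D := {a | a ∈ Subring.center D ∧ S.σ a = a}

/-- `σ` has order `n` modulo inner automorphisms, with `σ^n = i_u`, `u` fixed by `σ`. -/
def OrderModInner (n : ℕ) (u : D) : Prop :=
  0 < n ∧ u ≠ 0 ∧ S.σ u = u ∧ (∀ z : D, (⇑S.σ)^[n] z = u * z * u⁻¹) ∧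
  ∀ j : ℕ, 0 < j → j < n → ¬ ∃ w : D, w ≠ 0 ∧ ∀ z : D, (⇑S.σ)^[j] z = w * z * w⁻¹

/-- Evaluation of a commutative polynomial with coefficients in (the image of) `F`
at an element `x` of `R`. -/
noncomputable def evalAt {F : Type*} [Field F] (ιF : F →+* D) (p : Polynomial F) (x : R) : R :=
  p.sum fun i a => S.ι (ιF a) * x ^ i

/-- `h` is the minimal central left multiple of `f`, with `h = ĥ(u⁻¹ tⁿ)` for a monic `ĥ ∈ F[x]`. -/
def IsMclm (n : ℕ) (u : D) {F : Type*} [Field F] (ιF : F →+* D)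
    (f h : R) (hh : Polynomial F) : Prop :=
  h ∈ Subring.center R ∧ hh.Monic ∧
  h = S.evalAt ιF hh (S.ι u⁻¹ * S.t ^ n) ∧ (∃ g, h = g * f) ∧
  ∀ (h' : R) (hh' : Polynomial F), hh' ≠ 0 →
    h' = S.evalAt ιF hh' (S.ι u⁻¹ * S.t ^ n) → (∃ g, h' = g * f) → S.deg h ≤ S.deg h'

/-- `h` factors into `k` irreducible elements of `R`. -/
def FactorsIntoIrred (h : R) (k : ℕ) : Prop :=
  ∃ fs : Fin k → R, (∀ i, S.Irred (fs i)) ∧ h = (List.ofFn fs).prod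

/-- `modr g f` is the remainder of `g` under right division by `f`. -/
def IsModR (modr : R → R → R) : Prop :=
  ∀ g f : R, 1 ≤ S.deg f →
    (∃ q, g = q * f + modr g f) ∧ (modr g f = 0 ∨ S.deg (modr g f) < S.deg f)

/-- The set `A = { d₀ + d₁ t + ⋯ + d_{lm-1} t^{lm-1} + ν ρ(d₀) t^{lm} }`. -/
def ASet (ν : D) (ρ : D ≃+* D) (lm : ℕ) : Set R :=
  {x | ∃ b : R, S.deg b < lm ∧ x = b + S.ι (ν * ρ (S.const b)) * S.t ^ lm}

/-- The twisted multiplication `b ∘ c = (b + ν ρ(b₀) t^{lm}) c  mod_r f`. -/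
def circ (modr : R → R → R) (f : R) (ν : D) (ρ : D ≃+* D) (lm : ℕ) (b c : R) : R :=
  modr ((b + S.ι (ν * ρ (S.const b)) * S.t ^ lm) * c) f

/-- All coefficients of `p` lie in the subfield (image of) `E`. -/
def CoeffsIn {E : Type*} [Field E] (ιE : E →+* D) (p : R) : Prop := ∀ i, ∃ e, ιE e = S.coeff p i

end SkewPolyData

/-- `D` has dimension `d2` over its center. -/
def CentralDim (D : Type*) [DivisionRing D] (d2 : ℕ) : Prop :=
  ∃ bas : Fin d2 → D,
    (∀ x : D, ∃ c : Fin d2 → D, (∀ i, c i ∈ Subring.center D) ∧ x = ∑ i, c i * bas i) ∧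
    (∀ c : Fin d2 → D, (∀ i, c i ∈ Subring.center D) → ∑ i, c i * bas i = 0 → ∀ i, c i = 0)

/-- `Fb` is finite-dimensional as a vector space over the subfield `F'` of `D`. -/
def FinDimOver {D : Type*} [DivisionRing D] (F' Fb : Set D) : Prop :=
  ∃ T : Finset D, ↑T ⊆ Fb ∧ ∀ a ∈ Fb, ∃ c : D → D, (∀ x ∈ T, c x ∈ F') ∧ a = ∑ x ∈ T, c x * x

/-- The column rank of a matrix over a division ring: the rank of the right `B`-module
generated by its columns. -/
noncomputable def colrank {k : ℕ} {B : Type*} [DivisionRing B]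
    (M : Matrix (Fin k) (Fin k) B) : ℕ :=
  Module.finrank Bᵐᵒᵖ (Submodule.span Bᵐᵒᵖ (Set.range fun j : Fin k => fun i : Fin k => M i j))

/-- `D` is presented as the cyclic algebra `(E/C, γ, aC)` of degree `d`, with maximal
subfield `E` embedded by `ιE`, `Gal(E/C) = ⟨γ⟩` and a generator `e` with `e^d = aC`. -/
def IsCyclicPresentation {D : Type*} [DivisionRing D] {C E : Type*} [Field C] [Field E]
    [Algebra C E] (ιE : E →+* D) (γ : E ≃ₐ[C] E) (d : ℕ) (e : D) (aC : C) : Prop :=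
  (∀ a : D, a ∈ Subring.center D ↔ ∃ c : C, ιE (algebraMap C E c) = a) ∧
  Module.finrank C E = d ∧
  (∀ τ : E ≃ₐ[C] E, τ ∈ Subgroup.zpowers γ) ∧
  (∀ z : E, e * ιE z = ιE (γ z) * e) ∧
  e ^ d = ιE (algebraMap C E aC) ∧
  (∀ x : D, ∃ c : Fin d → E, x = ∑ i, ιE (c i) * e ^ (i : ℕ))

/-- Multiplication of matrices with entries representing elements of `B = Nuc_r(S_f)`,
where entries multiply via `a ∘ b = ab mod_r f`. -/
def matmulB {R : Type*} [Ring R] (modr : R → R → R) (f : R) {k : ℕ}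
    (M N : Fin k → Fin k → R) : Fin k → Fin k → R :=
  fun i j => ∑ l, modr (M i l * N l j) f

end SkewPaper

namespace SkewAux
open SkewPaper
variable {D R : Type*} [DivisionRing D] [Ring R] (S : SkewPolyData D R)

/-- sum of a finsupp representation -/
noncomputable def sumOf (c : ℕ →₀ D) : R := ∑ j ∈ c.support, S.ι (c j) * S.t ^ j

lemma coeff_sumOf (c : ℕ →₀ D) (i : ℕ) : S.coeff (sumOf S c) i = c i :=
  S.coeff_sum c i

lemma sumOf_eq_sum_subset (c : ℕ →₀ D) {s : Finset ℕ} (hs : c.support ⊆ s) :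
    sumOf S c = ∑ j ∈ s, S.ι (c j) * S.t ^ j := by
  refine Finset.sum_subset hs (fun x _ hx => ?_)
  rw [Finsupp.notMem_support_iff.mp hx, map_zero, zero_mul]

/-- if f is a sum over s ⊇ supp c, the coefficients of f are c -/
lemma coeff_of_eq_sum {f : R} {c : ℕ →₀ D} {s : Finset ℕ} (hs : c.support ⊆ s)
    (hf : f = ∑ j ∈ s, S.ι (c j) * S.t ^ j) (i : ℕ) : S.coeff f i = c i := by
  rw [hf, ← sumOf_eq_sum_subset S c hs, coeff_sumOf]

noncomputable def fin (f : R) : ℕ →₀ D :=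
  Finsupp.ofSupportFinite (S.coeff f) (S.support_finite f)

@[simp] lemma fin_apply (f : R) (i : ℕ) : fin S f i = S.coeff f i := rfl

lemma repr (f : R) : f = sumOf S (fin S f) := by
  refine S.coeff_ext _ _ (fun i => ?_)
  rw [coeff_sumOf, fin_apply]

@[simp] lemma coeff_zero (i : ℕ) : S.coeff (0 : R) i = 0 := by
  have := coeff_of_eq_sum S (f := (0:R)) (c := 0) (s := ∅) (by simp) (by simp) i
  simpa using this

@[simp] lemma coeff_add (f g : R) (i : ℕ) :
    S.coeff (f + g) i = S.coeff f i + S.coeff g i := by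
  have hs : (fin S f + fin S g).support ⊆ (fin S f).support ∪ (fin S g).support :=
    Finsupp.support_add
  have h2 : f + g = ∑ j ∈ (fin S f).support ∪ (fin S g).support,
      S.ι ((fin S f + fin S g) j) * S.t ^ j := by
    conv_lhs => rw [repr S f, repr S g]
    rw [sumOf_eq_sum_subset S (fin S f) (Finset.subset_union_left),
        sumOf_eq_sum_subset S (fin S g) (Finset.subset_union_right),
        ← Finset.sum_add_distrib]
    refine Finset.sum_congr rfl (fun j _ => ?_)
    rw [Finsupp.add_apply, map_add, add_mul]
  have := coeff_of_eq_sum S hs h2 i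
  simpa using this

@[simp] lemma coeff_neg (f : R) (i : ℕ) : S.coeff (-f) i = - S.coeff f i := by
  have := coeff_add S f (-f) i
  simp only [add_neg_cancel, coeff_zero] at this
  exact eq_neg_of_add_eq_zero_right this.symm

@[simp] lemma coeff_sub (f g : R) (i : ℕ) :
    S.coeff (f - g) i = S.coeff f i - S.coeff g i := by
  rw [sub_eq_add_neg, coeff_add, coeff_neg, sub_eq_add_neg]

lemma coeff_finsum {α : Type*} (s : Finset α) (F : α → R) (i : ℕ) :
    S.coeff (∑ a ∈ s, F a) i = ∑ a ∈ s, S.coeff (F a) i := by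
  classical
  induction s using Finset.induction with
  | empty => simp
  | insert _ _ ha ih => simp [Finset.sum_insert ha, ih]

lemma coeff_single (a : D) (k i : ℕ) :
    S.coeff (S.ι a * S.t ^ k) i = if i = k then a else 0 := by
  have h2 : S.ι a * S.t ^ k = ∑ j ∈ {k}, S.ι (Finsupp.single k a j) * S.t ^ j := by
    simp
  rw [coeff_of_eq_sum S Finsupp.support_single_subset h2 i, Finsupp.single_apply]
  simp only [eq_comm]

@[simp] lemma coeff_one (i : ℕ) : S.coeff (1 : R) i = if i = 0 then 1 else 0 := by
  have := coeff_single S 1 0 i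
  simpa using this

-- σ iterate lemmas
lemma iter_one (k : ℕ) : (⇑S.σ)^[k] (1:D) = 1 := by
  induction k with
  | zero => rfl
  | succ k ih => rw [Function.iterate_succ_apply', ih, map_one]

lemma iter_mul (k : ℕ) (a b : D) :
    (⇑S.σ)^[k] (a * b) = (⇑S.σ)^[k] a * (⇑S.σ)^[k] b := by
  induction k with
  | zero => rfl
  | succ k ih => rw [Function.iterate_succ_apply', Function.iterate_succ_apply',
      Function.iterate_succ_apply', ih, map_mul]

lemma iter_map_zero (k : ℕ) : (⇑S.σ)^[k] (0:D) = 0 := by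
  induction k with
  | zero => rfl
  | succ k ih => rw [Function.iterate_succ_apply', ih, map_zero]

lemma iter_zero_iff (k : ℕ) (a : D) : (⇑S.σ)^[k] a = 0 ↔ a = 0 := by
  constructor
  · intro hzero
    exact (Function.Injective.iterate S.σ.injective k) (by rw [hzero, iter_map_zero])
  · intro hzero; rw [hzero, iter_map_zero]

lemma iter_ne_zero (k : ℕ) {a : D} (ha : a ≠ 0) : (⇑S.σ)^[k] a ≠ 0 :=
  fun h => ha ((iter_zero_iff S k a).mp h)

lemma twist_pow (k : ℕ) (a : D) :
    S.t ^ k * S.ι a = S.ι ((⇑S.σ)^[k] a) * S.t ^ k := by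
  induction k with
  | zero => simp
  | succ k ih =>
    rw [pow_succ', mul_assoc, ih, ← mul_assoc, S.twist, mul_assoc, ← pow_succ',
      Function.iterate_succ_apply' (⇑S.σ) k a]

/-- the shift embedding -/
def emb (k : ℕ) : ℕ ↪ ℕ := ⟨fun j => k + j, fun x y h => by simpa using h⟩

lemma coeff_shift (a : D) (k : ℕ) (f : R) (i : ℕ) :
    S.coeff (S.ι a * S.t ^ k * f) i =
      if k ≤ i then a * (⇑S.σ)^[k] (S.coeff f (i - k)) else 0 := by
  classical
  set c : ℕ →₀ D := fin S f with hc
  set d : ℕ →₀ D :=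
    Finsupp.embDomain (emb k)
      (c.mapRange (fun x => a * (⇑S.σ)^[k] x) (by simp)) with hd
  have hsub : d.support ⊆ c.support.map (emb k) := by
    rw [hd, Finsupp.support_embDomain]
    exact Finset.map_subset_map.mpr Finsupp.support_mapRange
  have hrepr : S.ι a * S.t ^ k * f = ∑ j ∈ c.support.map (emb k), S.ι (d j) * S.t ^ j := by
    rw [Finset.sum_map]
    conv_lhs => rw [repr S f]
    rw [sumOf, ← hc, Finset.mul_sum]
    refine Finset.sum_congr rfl (fun j _ => ?_)
    have : d (emb k j) = a * (⇑S.σ)^[k] (c j) := by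
      rw [hd, Finsupp.embDomain_apply_self, Finsupp.mapRange_apply]
    rw [this, map_mul]
    have e1 : (emb k) j = k + j := rfl
    rw [e1, pow_add, mul_assoc (S.ι a), ← mul_assoc (S.t ^ k), twist_pow S k (c j)]
    simp [mul_assoc]
  rw [coeff_of_eq_sum S hsub hrepr i]
  by_cases hk : k ≤ i
  · have : i = emb k (i - k) := by show i = k + (i - k); omega
    rw [if_pos hk, this, hd, Finsupp.embDomain_apply_self, Finsupp.mapRange_apply]
    rw [show (emb k) (i - k) - k = i - k from Nat.add_sub_cancel_left ..]
    simp [emb, hc, Nat.add_sub_cancel_left]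
  · rw [if_neg hk, hd, Finsupp.embDomain_notin_range]
    rintro ⟨j, hj⟩
    simp only [emb, Function.Embedding.coeFn_mk] at hj
    change k + j = i at hj
    omega

lemma coeff_const_mul (a : D) (f : R) (i : ℕ) :
    S.coeff (S.ι a * f) i = a * S.coeff f i := by
  have := coeff_shift S a 0 f i
  simpa using this

lemma ne_zero_of_coeff {f : R} {i : ℕ} (h : S.coeff f i ≠ 0) : f ≠ 0 := by
  intro h0; rw [h0] at h; exact h (coeff_zero S i)

lemma exists_coeff_ne_zero {f : R} (hf : f ≠ 0) : ∃ i, S.coeff f i ≠ 0 := by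
  by_contra hc
  push_neg at hc
  exact hf (S.coeff_ext f 0 (fun i => by rw [hc i, coeff_zero]))

lemma le_deg_of_coeff_ne {f : R} {i : ℕ} (h : S.coeff f i ≠ 0) : i ≤ S.deg f :=
  le_csSup (S.support_finite f).bddAbove h

lemma coeff_deg_ne_zero {f : R} (hf : f ≠ 0) : S.coeff f (S.deg f) ≠ 0 := by
  have hne : {i | S.coeff f i ≠ 0}.Nonempty := exists_coeff_ne_zero S hf
  exact Nat.sSup_mem hne (S.support_finite f).bddAbove

lemma coeff_eq_zero_of_deg_lt {f : R} {i : ℕ} (h : S.deg f < i) : S.coeff f i = 0 := by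
  by_contra hc
  exact absurd (le_deg_of_coeff_ne S hc) (by omega)

lemma deg_le_of {f : R} {N : ℕ} (h : ∀ i, N < i → S.coeff f i = 0) : S.deg f ≤ N := by
  by_cases hne : {i | S.coeff f i ≠ 0}.Nonempty
  · exact csSup_le hne (fun i hi => by by_contra hc; exact hi (h i (by omega)))
  · rw [Set.not_nonempty_iff_eq_empty] at hne
    rw [SkewPolyData.deg, hne]
    simp

lemma coeff_mul (f g : R) (j : ℕ) :
    S.coeff (f * g) j = ∑ i ∈ (fin S f).support,
      if i ≤ j then S.coeff f i * (⇑S.σ)^[i] (S.coeff g (j - i)) else 0 := by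
  conv_lhs => rw [repr S f, sumOf, Finset.sum_mul, coeff_finsum]
  refine Finset.sum_congr rfl (fun i _ => ?_)
  rw [coeff_shift, fin_apply]

lemma coeff_mul_deg_add_deg {f g : R} (hf : f ≠ 0) (hg : g ≠ 0) :
    S.coeff (f * g) (S.deg f + S.deg g) =
      S.coeff f (S.deg f) * (⇑S.σ)^[S.deg f] (S.coeff g (S.deg g)) := by
  rw [coeff_mul]
  rw [Finset.sum_eq_single (S.deg f)]
  · rw [if_pos (by omega), Nat.add_sub_cancel_left]
  · intro i hi hne
    have hile : i ≤ S.deg f := le_deg_of_coeff_ne S (by simpa using hi)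
    by_cases hij : i ≤ S.deg f + S.deg g
    · rw [if_pos hij,
        coeff_eq_zero_of_deg_lt S (f := g) (i := S.deg f + S.deg g - i) (by omega),
        iter_map_zero, mul_zero]
    · rw [if_neg hij]
  · intro hnot
    exact absurd (by simpa using coeff_deg_ne_zero S hf : S.deg f ∈ (fin S f).support) hnot

lemma coeff_mul_eq_zero_of_gt {f g : R} {j : ℕ} (hj : S.deg f + S.deg g < j) :
    S.coeff (f * g) j = 0 := by
  rw [coeff_mul]
  refine Finset.sum_eq_zero (fun i hi => ?_)
  have hile : i ≤ S.deg f := le_deg_of_coeff_ne S (by simpa using hi)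
  by_cases hij : i ≤ j
  · rw [if_pos hij, coeff_eq_zero_of_deg_lt S (f := g) (i := j - i) (by omega),
      iter_map_zero, mul_zero]
  · rw [if_neg hij]

lemma coeff_mul_top_ne_zero {f g : R} (hf : f ≠ 0) (hg : g ≠ 0) :
    S.coeff (f * g) (S.deg f + S.deg g) ≠ 0 := by
  rw [coeff_mul_deg_add_deg S hf hg]
  exact mul_ne_zero (coeff_deg_ne_zero S hf)
    (iter_ne_zero S _ (coeff_deg_ne_zero S hg))

lemma deg_mul {f g : R} (hf : f ≠ 0) (hg : g ≠ 0) :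
    S.deg (f * g) = S.deg f + S.deg g := by
  refine le_antisymm (deg_le_of S (fun i hi => coeff_mul_eq_zero_of_gt S hi)) ?_
  exact le_deg_of_coeff_ne S (coeff_mul_top_ne_zero S hf hg)

lemma deg_const_mul {a : D} (ha : a ≠ 0) (f : R) : S.deg (S.ι a * f) = S.deg f := by
  apply le_antisymm
  · refine deg_le_of S (fun i hi => ?_)
    rw [coeff_const_mul, coeff_eq_zero_of_deg_lt S hi, mul_zero]
  · by_cases hf : f = 0
    · simp [hf, SkewPolyData.deg]
    · refine le_deg_of_coeff_ne S ?_
      rw [coeff_const_mul]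
      exact mul_ne_zero ha (coeff_deg_ne_zero S hf)

lemma deg_single (a : D) (ha : a ≠ 0) (k : ℕ) : S.deg (S.ι a * S.t ^ k) = k := by
  apply le_antisymm
  · refine deg_le_of S (fun i hi => ?_)
    rw [coeff_single, if_neg (by omega)]
  · refine le_deg_of_coeff_ne S ?_
    rw [coeff_single, if_pos rfl]
    exact ha

lemma eq_const_of_deg_zero {f : R} (h : S.deg f = 0) : f = S.ι (S.coeff f 0) := by
  refine S.coeff_ext _ _ (fun i => ?_)
  have h1 : S.ι (S.coeff f 0) = S.ι (S.coeff f 0) * S.t ^ 0 := by simp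
  rw [h1, coeff_single]
  rcases Nat.eq_zero_or_pos i with hi | hi
  · rw [hi, if_pos rfl]
  · rw [if_neg (by omega), coeff_eq_zero_of_deg_lt S (by omega)]

lemma monic_deg_zero_eq_one {f : R} (h : S.deg f = 0) (hm : S.Monic f) : f = 1 := by
  have := eq_const_of_deg_zero S h
  rw [SkewPolyData.Monic, h] at hm
  rw [this, hm, map_one]

lemma div_monic (f : R) (hf1 : S.Monic f) (hd : 1 ≤ S.deg f) :
    ∀ a : R, ∃ q r, a = q * f + r ∧ (r = 0 ∨ S.deg r < S.deg f) := by
  suffices H : ∀ N a, S.deg a ≤ N → ∃ q r, a = q * f + r ∧ (r = 0 ∨ S.deg r < S.deg f) by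
    exact fun a => H (S.deg a) a le_rfl
  intro N
  induction N using Nat.strong_induction_on with
  | _ N ih =>
    intro a hdegA
    by_cases ha : a = 0
    · exact ⟨0, 0, by simp [ha], Or.inl rfl⟩
    by_cases hlt : S.deg a < S.deg f
    · exact ⟨0, a, by simp, Or.inr hlt⟩
    push_neg at hlt
    set k := S.deg a - S.deg f with hk
    set c := S.coeff a (S.deg a) with hc
    set a' := a - S.ι c * S.t ^ k * f with ha'
    have hvan : ∀ i, S.deg a ≤ i → S.coeff a' i = 0 := by
      intro i hi
      rw [ha', coeff_sub, coeff_shift, if_pos (by omega)]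
      rcases eq_or_lt_of_le hi with hieq | higt
      · have h3 : i - k = S.deg f := by omega
        rw [h3, hf1, iter_one, mul_one, ← hieq, hc, sub_self]
      · rw [coeff_eq_zero_of_deg_lt S (f := a) higt,
          coeff_eq_zero_of_deg_lt S (f := f) (by omega), iter_map_zero, mul_zero,
          sub_self]
    have hsplit : a = a' + S.ι c * S.t ^ k * f := by rw [ha']; abel
    by_cases ha0 : a' = 0
    · refine ⟨S.ι c * S.t ^ k, 0, ?_, Or.inl rfl⟩
      rw [hsplit, ha0, zero_add, add_zero]
    · have hdlt : S.deg a' < S.deg a := by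
        by_contra hcon
        push_neg at hcon
        exact coeff_deg_ne_zero S ha0 (hvan _ hcon)
      obtain ⟨q', r', h1, h2⟩ := ih (S.deg a') (by omega) a' le_rfl
      refine ⟨S.ι c * S.t ^ k + q', r', ?_, h2⟩
      rw [hsplit, h1, add_mul]
      abel

lemma bezout {f z : R} (hfirr : SkewPaper.SkewPolyData.Irred S f)
    (hfne : f ≠ 0) (hzz : ¬ ∃ q : R, z = q * f) : ∃ a b : R, a * f + b * z = 1 := by
  classical
  set J : Set R := {x | ∃ a b : R, x = a * f + b * z} with hJ
  have hfJ : f ∈ J := ⟨1, 0, by simp⟩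
  have hzJ : z ∈ J := ⟨0, 1, by simp⟩
  have hmulJ : ∀ (q : R) {x}, x ∈ J → q * x ∈ J := by
    rintro q x ⟨a, b, rfl⟩
    exact ⟨q * a, q * b, by rw [mul_add, mul_assoc, mul_assoc]⟩
  have hsubJ : ∀ {x y}, x ∈ J → y ∈ J → x - y ∈ J := by
    rintro x y ⟨a, b, rfl⟩ ⟨a', b', rfl⟩
    exact ⟨a - a', b - b', by rw [sub_mul, sub_mul]; abel⟩
  have hzne : z ≠ 0 := fun h0 => hzz ⟨0, by rw [h0, zero_mul]⟩
  set Sd : Set ℕ := {d | ∃ x, x ∈ J ∧ x ≠ 0 ∧ S.deg x = d} with hSd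
  have hSdne : Sd.Nonempty := ⟨S.deg z, z, hzJ, hzne, rfl⟩
  obtain ⟨g, hgJ, hgne, hgdeg⟩ : ∃ x, x ∈ J ∧ x ≠ 0 ∧ S.deg x = sInf Sd :=
    Nat.sInf_mem hSdne
  set lc := S.coeff g (S.deg g) with hlc
  have hlcne : lc ≠ 0 := coeff_deg_ne_zero S hgne
  set g' := S.ι lc⁻¹ * g with hg'
  have hg'deg : S.deg g' = S.deg g := deg_const_mul S (inv_ne_zero hlcne) g
  have hg'monic : S.Monic g' := by
    rw [SkewPolyData.Monic, hg'deg, hg', coeff_const_mul, ← hlc, inv_mul_cancel₀ hlcne]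
  have hg'ne : g' ≠ 0 := by
    refine ne_zero_of_coeff S (i := S.deg g') ?_
    rw [hg'monic]; exact one_ne_zero
  have hg'J : g' ∈ J := hmulJ _ hgJ
  -- key: every element of J with nonzero deg < deg g' must vanish; divide f and z by g'
  rcases Nat.eq_zero_or_pos (S.deg g') with hdeg0 | hdegpos
  · -- g' = 1 ∈ J, done
    have : g' = 1 := monic_deg_zero_eq_one S hdeg0 hg'monic
    rw [this] at hg'J
    obtain ⟨a, b, hab⟩ := hg'J
    exact ⟨a, b, hab.symm⟩
  · exfalso
    have hdiv := div_monic S g' hg'monic hdegpos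
    have hrem : ∀ x ∈ J, ∃ q : R, x = q * g' := by
      intro x hx
      obtain ⟨q, r, h1, h2⟩ := hdiv x
      rcases h2 with h2 | h2
      · exact ⟨q, by rw [h1, h2, add_zero]⟩
      by_cases hr0 : r = 0
      · exact ⟨q, by rw [h1, hr0, add_zero]⟩
      exfalso
      have hrJ : r ∈ J := by
        have hxr : r = x - q * g' := by rw [h1]; abel
        rw [hxr]
        exact hsubJ hx (hmulJ q hg'J)
      have h4 : sInf Sd ≤ S.deg r := Nat.sInf_le ⟨r, hrJ, hr0, rfl⟩
      have h5 : S.deg g' ≤ S.deg r := by rw [hg'deg, hgdeg]; exact h4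
      omega
    obtain ⟨q, hq⟩ := hrem f hfJ
    obtain ⟨q'', hq''⟩ := hrem z hzJ
    have hqne : q ≠ 0 := by
      intro h0; rw [h0, zero_mul] at hq; exact hfne hq
    have hdegadd : S.deg f = S.deg q + S.deg g' := by rw [hq, deg_mul S hqne hg'ne]
    rcases Nat.eq_zero_or_pos (S.deg q) with hq0 | hqpos
    · -- q is a nonzero constant; g' = ι c⁻¹ f, so z ∈ Rf
      have hqc : q = S.ι (S.coeff q 0) := eq_const_of_deg_zero S hq0
      set cq := S.coeff q 0 with hcq
      have hcqne : cq ≠ 0 := by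
        have := coeff_deg_ne_zero S hqne
        rwa [hq0] at this
      have hg'f : g' = S.ι cq⁻¹ * f := by
        rw [hq, hqc, ← mul_assoc, ← map_mul, inv_mul_cancel₀ hcqne, map_one, one_mul]
      exact hzz ⟨q'' * S.ι cq⁻¹, by rw [hq'', hg'f, mul_assoc]⟩
    · -- proper factorization of f, contradiction with irreducibility
      refine hfirr.2 ⟨q, g', hqpos, by omega, hdegpos, by omega, hq⟩

lemma iter_fix {a : D} (ha : S.σ a = a) (k : ℕ) : (⇑S.σ)^[k] a = a := by
  induction k with
  | zero => rfl
  | succ k ih => rw [Function.iterate_succ_apply', ih, ha]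

lemma sigma_inv_fix {u : D} (hu : u ≠ 0) (hfix : S.σ u = u) : S.σ u⁻¹ = u⁻¹ := by
  have h1 : S.σ u⁻¹ * S.σ u = 1 := by rw [← map_mul, inv_mul_cancel₀ hu, map_one]
  rw [hfix] at h1
  exact eq_inv_of_mul_eq_one_left h1

lemma mem_center_of_commutes {w : R} (h1 : ∀ a : D, w * S.ι a = S.ι a * w)
    (h2 : w * S.t = S.t * w) : w ∈ Subring.center R := by
  rw [Subring.mem_center_iff]
  intro g
  conv_lhs => rw [repr S g]
  conv_rhs => rw [repr S g]
  rw [sumOf, Finset.sum_mul, Finset.mul_sum]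
  refine Finset.sum_congr rfl (fun j _ => ?_)
  have hpow : w * S.t ^ j = S.t ^ j * w := Commute.pow_right h2 j
  rw [mul_assoc, ← hpow, ← mul_assoc, ← h1, mul_assoc]

lemma central_x {n : ℕ} {u : D} (hu : u ≠ 0) (hfix : S.σ u = u)
    (hinner : ∀ z : D, (⇑S.σ)^[n] z = u * z * u⁻¹) :
    S.ι u⁻¹ * S.t ^ n ∈ Subring.center R := by
  apply mem_center_of_commutes S
  · intro a
    rw [mul_assoc, twist_pow, hinner, ← mul_assoc, ← map_mul]
    have key : u⁻¹ * (u * a * u⁻¹) = a * u⁻¹ := by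
      rw [← mul_assoc, ← mul_assoc, inv_mul_cancel₀ hu, one_mul]
    rw [key, map_mul, mul_assoc]
  · conv_rhs => rw [← mul_assoc, S.twist, sigma_inv_fix S hu hfix]
    rw [mul_assoc, mul_assoc, ← pow_succ, ← pow_succ']

lemma central_iota {a : D} (hcen : a ∈ Subring.center D) (hfix : S.σ a = a) :
    S.ι a ∈ Subring.center R := by
  apply mem_center_of_commutes S
  · intro b
    rw [← map_mul, ← map_mul, (Subring.mem_center_iff.mp hcen b).symm]
  · rw [S.twist, hfix]

lemma x_pow {n : ℕ} {u : D} (hu : u ≠ 0) (hfix : S.σ u = u) (i : ℕ) :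
    (S.ι u⁻¹ * S.t ^ n) ^ i = S.ι ((u⁻¹) ^ i) * S.t ^ (n * i) := by
  induction i with
  | zero => simp
  | succ i ih =>
    rw [pow_succ, ih, mul_assoc, ← mul_assoc (S.t ^ (n*i)), twist_pow,
      iter_fix S (sigma_inv_fix S hu hfix), ← mul_assoc, ← mul_assoc, ← map_mul,
      ← pow_succ, mul_assoc, ← pow_add, Nat.mul_succ]

section Eval
variable {F : Type*} [Field F] (ιF : F →+* D)

lemma evalAt_eq (p : Polynomial F) (x : R) :
    S.evalAt ιF p x = Polynomial.eval₂ (S.ι.comp ιF) x p := by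
  rw [Polynomial.eval₂_eq_sum]; rfl

lemma evalAt_mul {x : R} (hx : x ∈ Subring.center R) (p q : Polynomial F) :
    S.evalAt ιF (p * q) x = S.evalAt ιF p x * S.evalAt ιF q x := by
  rw [evalAt_eq, evalAt_eq, evalAt_eq, Polynomial.eval₂_mul_noncomm]
  intro k
  exact (Subring.mem_center_iff.mp hx _)

lemma evalAt_add (p q : Polynomial F) (x : R) :
    S.evalAt ιF (p + q) x = S.evalAt ιF p x + S.evalAt ιF q x := by
  rw [evalAt_eq, evalAt_eq, evalAt_eq, Polynomial.eval₂_add]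

lemma evalAt_one (x : R) : S.evalAt ιF (1 : Polynomial F) x = 1 := by
  rw [evalAt_eq, Polynomial.eval₂_one]

lemma evalAt_mem_center {x : R} (hx : x ∈ Subring.center R)
    (hcoe : ∀ c : F, S.ι (ιF c) ∈ Subring.center R) (p : Polynomial F) :
    S.evalAt ιF p x ∈ Subring.center R := by
  rw [SkewPolyData.evalAt, Polynomial.sum_def]
  refine Subring.sum_mem _ (fun i _ => Subring.mul_mem _ (hcoe _) (Subring.pow_mem _ hx i))

/-- multiplication-by-n embedding -/
def embN (n : ℕ) (hn : 0 < n) : ℕ ↪ ℕ :=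
  ⟨fun j => n * j, fun x y h => by
    simp only at h
    exact Nat.eq_of_mul_eq_mul_left hn h⟩

lemma coeff_evalAt {n : ℕ} (hn : 0 < n) {u : D} (hu : u ≠ 0) (hfix : S.σ u = u)
    (p : Polynomial F) (j : ℕ) :
    S.coeff (S.evalAt ιF p (S.ι u⁻¹ * S.t ^ n)) j =
      if n ∣ j then ιF (p.coeff (j / n)) * (u⁻¹) ^ (j / n) else 0 := by
  classical
  set cp : ℕ →₀ D :=
    Finsupp.onFinset p.support (fun i => ιF (p.coeff i) * (u⁻¹) ^ i)
      (fun i hi => by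
        rw [Polynomial.mem_support_iff]
        intro h0
        exact hi (by simp [h0])) with hcp
  set d : ℕ →₀ D := Finsupp.embDomain (embN n hn) cp with hd
  have hsub : d.support ⊆ p.support.map (embN n hn) := by
    rw [hd, Finsupp.support_embDomain]
    exact Finset.map_subset_map.mpr (Finsupp.support_onFinset_subset)
  have hrepr : S.evalAt ιF p (S.ι u⁻¹ * S.t ^ n) =
      ∑ i ∈ p.support.map (embN n hn), S.ι (d i) * S.t ^ i := by
    rw [Finset.sum_map, SkewPolyData.evalAt, Polynomial.sum_def]
    refine Finset.sum_congr rfl (fun i _ => ?_)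
    have h1 : d (embN n hn i) = ιF (p.coeff i) * (u⁻¹) ^ i := by
      rw [hd, Finsupp.embDomain_apply_self, hcp, Finsupp.onFinset_apply]
    have h2 : (embN n hn) i = n * i := rfl
    rw [h1, h2, x_pow S hu hfix, map_mul, mul_assoc]
  rw [coeff_of_eq_sum S hsub hrepr j]
  by_cases hdvd : n ∣ j
  · have hj : j = embN n hn (j / n) := (Nat.mul_div_cancel' hdvd).symm
    rw [if_pos hdvd, hj, hd, Finsupp.embDomain_apply_self, hcp, Finsupp.onFinset_apply]
    have h3 : (embN n hn) (j / n) / n = j / n := by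
      simp only [embN, Function.Embedding.coeFn_mk]
      exact Nat.mul_div_cancel_left _ hn
    rw [h3]
  · rw [if_neg hdvd, hd, Finsupp.embDomain_notin_range]
    rintro ⟨i, hi⟩
    simp only [embN, Function.Embedding.coeFn_mk] at hi
    exact hdvd ⟨i, hi.symm⟩

lemma coeff_evalAt_top {n : ℕ} (hn : 0 < n) {u : D} (hu : u ≠ 0) (hfix : S.σ u = u)
    {p : Polynomial F} (hp : p ≠ 0) :
    S.coeff (S.evalAt ιF p (S.ι u⁻¹ * S.t ^ n)) (n * p.natDegree) ≠ 0 := by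
  rw [coeff_evalAt S ιF hn hu hfix, if_pos ⟨p.natDegree, rfl⟩,
    Nat.mul_div_cancel_left _ hn]
  exact mul_ne_zero
    (fun h0 => Polynomial.leadingCoeff_ne_zero.mpr hp
      (ιF.injective (by rw [Polynomial.leadingCoeff, h0, map_zero])))
    (pow_ne_zero _ (inv_ne_zero hu))

lemma deg_evalAt {n : ℕ} (hn : 0 < n) {u : D} (hu : u ≠ 0) (hfix : S.σ u = u)
    {p : Polynomial F} (hp : p ≠ 0) :
    S.deg (S.evalAt ιF p (S.ι u⁻¹ * S.t ^ n)) = n * p.natDegree := by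
  refine le_antisymm (deg_le_of S (fun j hj => ?_))
    (le_deg_of_coeff_ne S (coeff_evalAt_top S ιF hn hu hfix hp))
  rw [coeff_evalAt S ιF hn hu hfix]
  by_cases hdvd : n ∣ j
  · rw [if_pos hdvd]
    have : p.natDegree < j / n := by
      obtain ⟨c, rfl⟩ := hdvd
      rw [Nat.mul_div_cancel_left _ hn]
      by_contra hcon
      push_neg at hcon
      exact absurd hj (by push_neg; exact Nat.mul_le_mul_left n hcon)
    rw [Polynomial.coeff_eq_zero_of_natDegree_lt this, map_zero, zero_mul]
  · rw [if_neg hdvd]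

lemma evalAt_ne_zero {n : ℕ} (hn : 0 < n) {u : D} (hu : u ≠ 0) (hfix : S.σ u = u)
    {p : Polynomial F} (hp : p ≠ 0) :
    S.evalAt ιF p (S.ι u⁻¹ * S.t ^ n) ≠ 0 :=
  ne_zero_of_coeff S (coeff_evalAt_top S ιF hn hu hfix hp)

end Eval

end SkewAux

open SkewPaper SkewAux

/-- Let `f ∈ R = D[t;σ]` be monic irreducible of degree `m > 1` with
`gcrd(f,t) = 1` and minimal central left multiple `h(t) = ĥ(u⁻¹tⁿ)`.
(i) For each `z(t) = ẑ(u⁻¹tⁿ) ∈ F[u⁻¹tⁿ]` with `ẑ ∈ F[x]`, one has `z ∈ Rf ↔ z ∈ Rh`.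
(ii) The set `E_f = {z(t) + Rf | z(t) = ẑ(u⁻¹tⁿ)}`, with multiplication
`(x + Rf)∘(y + Rf) = xy + Rf`, is a field isomorphic to `E_ĥ = F[x]/(ĥ(x))`: the ring
homomorphism `F[x] → E_f`, `p ↦ p(u⁻¹tⁿ) + Rf` has kernel exactly `(ĥ)`, and every element
of `E_f` not in the kernel is invertible modulo `Rf` within `E_f`. -/
theorem Ef_is_field_isomorphic_to_Ehhat
    {D Rg : Type*} [DivisionRing D] [Ring Rg] (S : SkewPolyData D Rg)
    (n : ℕ) (u : D) (hord : S.OrderModInner n u)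
    {F : Type*} [Field F] (ιF : F →+* D)
    (hFrange : ∀ a : D, a ∈ S.Fset ↔ ∃ c : F, ιF c = a)
    (f : Rg) (m : ℕ) (hm : 1 < m) (hdegf : S.deg f = m) (hmonic : S.Monic f)
    (hirr : S.Irred f) (hcop : S.CoprimeT f)
    (h : Rg) (hh : Polynomial F) (hmclm : S.IsMclm n u ιF f h hh) :
    (∀ p : Polynomial F,
      (∃ q, S.evalAt ιF p (S.ι u⁻¹ * S.t ^ n) = q * f) ↔
      (∃ q, S.evalAt ιF p (S.ι u⁻¹ * S.t ^ n) = q * h)) ∧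
    (∀ p : Polynomial F, (∃ q, S.evalAt ιF p (S.ι u⁻¹ * S.t ^ n) = q * f) ↔ hh ∣ p) ∧
    (∀ p : Polynomial F, ¬ hh ∣ p →
      ∃ (q : Polynomial F) (w : Rg),
        S.evalAt ιF (p * q) (S.ι u⁻¹ * S.t ^ n) = 1 + w * f) := by
  classical
  obtain ⟨hn, hu, hufix, hinner, -⟩ := hord
  obtain ⟨hcen, hhmonic, hhe, ⟨g, hgf⟩, hmin⟩ := hmclm
  set x : Rg := S.ι u⁻¹ * S.t ^ n with hx
  have hxc : x ∈ Subring.center Rg := central_x S hu hufix hinner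
  have hcoe : ∀ c : F, S.ι (ιF c) ∈ Subring.center Rg := by
    intro c
    have hmemF : ιF c ∈ S.Fset := (hFrange (ιF c)).mpr ⟨c, rfl⟩
    exact central_iota S hmemF.1 hmemF.2
  have hfne : f ≠ 0 := ne_zero_of_coeff S (by rw [hmonic]; exact one_ne_zero)
  have hhne : hh ≠ 0 := hhmonic.ne_zero
  -- the ideal of polynomials whose evaluation lies in Rf
  let I : Ideal (Polynomial F) :=
    { carrier := {p : Polynomial F | ∃ q : Rg, S.evalAt ιF p x = q * f}
      add_mem' := by
        rintro p q ⟨qp, hp⟩ ⟨qq, hq⟩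
        exact ⟨qp + qq, by rw [evalAt_add, hp, hq, add_mul]⟩
      zero_mem' := ⟨0, by rw [evalAt_eq, Polynomial.eval₂_zero, zero_mul]⟩
      smul_mem' := by
        rintro r p ⟨qp, hp⟩
        exact ⟨S.evalAt ιF r x * qp,
          by rw [smul_eq_mul, evalAt_mul S ιF hxc, hp, mul_assoc]⟩ }
  have hmem : ∀ p : Polynomial F, (∃ q : Rg, S.evalAt ιF p x = q * f) ↔ p ∈ I :=
    fun p => Iff.rfl
  have hhI : hh ∈ I := (hmem hh).mp ⟨g, by rw [← hhe]; exact hgf⟩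
  obtain ⟨g₀, hIg⟩ := (IsPrincipalIdealRing.principal I).principal
  have hg₀dvd : g₀ ∣ hh := by
    have hhI' := hhI
    rw [hIg] at hhI'
    exact Ideal.mem_span_singleton.mp hhI'
  have hg₀ne : g₀ ≠ 0 := by
    rintro rfl
    exact hhne (zero_dvd_iff.mp hg₀dvd)
  have hg₀I : g₀ ∈ I := by
    rw [hIg]
    exact Submodule.mem_span_singleton_self g₀
  obtain ⟨q₀, hq₀⟩ := (hmem g₀).mpr hg₀I
  have hdegh : S.deg h = n * hh.natDegree := by
    rw [hhe]; exact deg_evalAt S ιF hn hu hufix hhne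
  have hmin' : S.deg h ≤ S.deg (S.evalAt ιF g₀ x) :=
    hmin _ g₀ hg₀ne rfl ⟨q₀, hq₀⟩
  have hdegg₀ : S.deg (S.evalAt ιF g₀ x) = n * g₀.natDegree :=
    deg_evalAt S ιF hn hu hufix hg₀ne
  have hdgele : hh.natDegree ≤ g₀.natDegree := by
    rw [hdegh, hdegg₀] at hmin'
    exact Nat.le_of_mul_le_mul_left hmin' hn
  have hdgege : g₀.natDegree ≤ hh.natDegree := Polynomial.natDegree_le_of_dvd hg₀dvd hhne
  -- hh divides g₀ as well
  have hhdvdg₀ : hh ∣ g₀ := by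
    obtain ⟨c, hc⟩ := hg₀dvd
    have hcne : c ≠ 0 := by rintro rfl; rw [mul_zero] at hc; exact hhne hc
    have hdegc : c.natDegree = 0 := by
      have := Polynomial.natDegree_mul hg₀ne hcne
      rw [← hc] at this
      omega
    obtain ⟨a, rfl⟩ := Polynomial.natDegree_eq_zero.mp hdegc
    have hane : a ≠ 0 := by rintro rfl; simp at hcne
    exact ⟨Polynomial.C a⁻¹, by rw [hc, mul_assoc, ← Polynomial.C_mul,
      mul_inv_cancel₀ hane, Polynomial.C_1, mul_one]⟩
  have key : ∀ p : Polynomial F, p ∈ I ↔ hh ∣ p := by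
    intro p
    constructor
    · intro hp
      rw [hIg] at hp
      exact dvd_trans hhdvdg₀ (Ideal.mem_span_singleton.mp hp)
    · rintro ⟨s, rfl⟩
      exact I.mul_mem_right s hhI
  -- nontriviality helper: 1 ∉ I
  have honeI : (1 : Polynomial F) ∉ I := by
    intro h1I
    obtain ⟨q, hq⟩ := (hmem 1).mpr h1I
    rw [evalAt_one] at hq
    by_cases hqne : q = 0
    · rw [hqne, zero_mul] at hq
      have h2 := coeff_one S (R := Rg) 0
      rw [hq, coeff_zero] at h2
      simp at h2
    · have htop := coeff_mul_top_ne_zero S hqne hfne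
      rw [← hq, coeff_one S] at htop
      rw [if_neg (by omega)] at htop
      exact htop rfl
  -- hh is irreducible
  have hhirr : Irreducible hh := by
    constructor
    · intro hun
      have h1 : hh = 1 := hhmonic.eq_one_of_isUnit hun
      exact honeI (h1 ▸ hhI)
    · intro a b hab
      by_contra hcon
      push_neg at hcon
      obtain ⟨hna, hnb⟩ := hcon
      have hane : a ≠ 0 := by rintro rfl; rw [zero_mul] at hab; exact hhne hab
      have hbne : b ≠ 0 := by rintro rfl; rw [mul_zero] at hab; exact hhne hab
      have hdega : 0 < a.natDegree := by
        rcases Nat.eq_zero_or_pos a.natDegree with h0 | h0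
        · obtain ⟨ca, rfl⟩ := Polynomial.natDegree_eq_zero.mp h0
          exact absurd (Polynomial.isUnit_C.mpr (isUnit_iff_ne_zero.mpr
            (fun hc => hane (by rw [hc, Polynomial.C_0])))) hna
        · exact h0
      have hdegb : 0 < b.natDegree := by
        rcases Nat.eq_zero_or_pos b.natDegree with h0 | h0
        · obtain ⟨cb, rfl⟩ := Polynomial.natDegree_eq_zero.mp h0
          exact absurd (Polynomial.isUnit_C.mpr (isUnit_iff_ne_zero.mpr
            (fun hc => hbne (by rw [hc, Polynomial.C_0])))) hnb
        · exact h0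
      have hdeghh : hh.natDegree = a.natDegree + b.natDegree := by
        rw [hab]; exact Polynomial.natDegree_mul hane hbne
      have hnadvd : ¬ hh ∣ a := fun hd =>
        absurd (Polynomial.natDegree_le_of_dvd hd hane) (by omega)
      have hnbdvd : ¬ hh ∣ b := fun hd =>
        absurd (Polynomial.natDegree_le_of_dvd hd hbne) (by omega)
      have haI : a ∉ I := fun hp => hnadvd ((key a).mp hp)
      have hbI : b ∉ I := fun hp => hnbdvd ((key b).mp hp)
      -- Bezout with φ b
      have hzb : ¬ ∃ q : Rg, S.evalAt ιF b x = q * f := fun hq => hbI ((hmem b).mp hq)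
      obtain ⟨α, β, hαβ⟩ := bezout S hirr hfne hzb
      have hacen := evalAt_mem_center S ιF hxc hcoe a
      have h2 : S.evalAt ιF a x * (β * S.evalAt ιF b x) = β * g * f := by
        rw [← mul_assoc, ← Subring.mem_center_iff.mp hacen β, mul_assoc,
          ← evalAt_mul S ιF hxc, ← hab, ← hhe, hgf, ← mul_assoc]
      have hfinal : S.evalAt ιF a x =
          (S.evalAt ιF a x * α + β * g) * f := by
        calc S.evalAt ιF a x
            = S.evalAt ιF a x * (α * f + β * S.evalAt ιF b x) := by rw [hαβ, mul_one]
          _ = S.evalAt ιF a x * α * f + β * g * f := by rw [mul_add, ← mul_assoc, h2]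
          _ = (S.evalAt ιF a x * α + β * g) * f := by rw [add_mul]
      exact haI ((hmem a).mp ⟨S.evalAt ιF a x * α + β * g, hfinal⟩)
  refine ⟨?_, ?_, ?_⟩
  · intro p
    constructor
    · intro hp
      obtain ⟨s, rfl⟩ := (key p).mp ((hmem p).mp hp)
      refine ⟨S.evalAt ιF s x, ?_⟩
      rw [evalAt_mul S ιF hxc, ← hhe, ← Subring.mem_center_iff.mp hcen _]
    · rintro ⟨q, hq⟩
      exact ⟨q * g, by rw [hq, hgf, mul_assoc]⟩
  · intro p
    rw [hmem p]
    exact key p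
  · intro p hndvd
    have hcop' : IsCoprime hh p := hhirr.coprime_iff_not_dvd.mpr hndvd
    obtain ⟨A, B, hAB⟩ := hcop'
    refine ⟨B, -(S.evalAt ιF A x * g), ?_⟩
    have e1 : S.evalAt ιF (A * hh + B * p) x = 1 := by rw [hAB, evalAt_one]
    rw [evalAt_add, evalAt_mul S ιF hxc, evalAt_mul S ιF hxc, ← hhe] at e1
    have e2 : S.evalAt ιF (p * B) x = S.evalAt ιF B x * S.evalAt ιF p x := by
      rw [mul_comm p B, evalAt_mul S ιF hxc]
    rw [e2]
    have e3 : S.evalAt ιF B x * S.evalAt ιF p x = 1 - S.evalAt ιF A x * h := by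
      rw [← e1]; abel
    rw [e3, hgf, ← mul_assoc, sub_eq_add_neg, neg_mul]
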